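/- (Shifted small-ball bound for a multivariate Gaussian.) Let X be a centered Gaussian random vector in ℝ^m with positive definite covariance matrix Σ. Then for every θ ∈ ℝ^m and every δ > 0, P( max_{1 ≤ i ≤ m} |X_i − θ_i| ≤ δ ) ≥ exp( −θᵀ Σ^{−1} θ / 2 ) · P( max_{1 ≤ i ≤ m} |X_i| ≤ δ ). -/

import Mathlib

open MeasureTheory Matrix
open scoped ENNReal

/-- The density of the centered multivariate normal distribution `N(0, Σ)` on `ℝ^m`,
for a positive definite covariance matrix `Σ`. -/
noncomputable def gaussianDensity (m : ℕ) (S : Matrix (Fin m) (Fin m) ℝ)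
    (x : Fin m → ℝ) : ℝ :=
  (Real.sqrt ((2 * Real.pi) ^ m * S.det))⁻¹ * Real.exp (-(x ⬝ᵥ (S⁻¹ *ᵥ x)) / 2)

/-- The law of a centered Gaussian random vector in `ℝ^m` with covariance `Σ`:
the measure with density `gaussianDensity` with respect to Lebesgue measure. -/
noncomputable def gaussianLaw (m : ℕ) (S : Matrix (Fin m) (Fin m) ℝ) :
    Measure (Fin m → ℝ) :=
  volume.withDensity fun x => ENNReal.ofReal (gaussianDensity m S x)

lemma gaussianDensity_measurable (m : ℕ) (S : Matrix (Fin m) (Fin m) ℝ) :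
    Measurable (gaussianDensity m S) := by
  have : Continuous (gaussianDensity m S) := by
    unfold gaussianDensity Matrix.mulVec dotProduct
    continuity
  exact this.measurable

lemma quad_sum (m : ℕ) (A : Matrix (Fin m) (Fin m) ℝ) (θ x : Fin m → ℝ) :
    (θ + x) ⬝ᵥ (A *ᵥ (θ + x)) + (θ - x) ⬝ᵥ (A *ᵥ (θ - x))
      = 2 * (θ ⬝ᵥ (A *ᵥ θ)) + 2 * (x ⬝ᵥ (A *ᵥ x)) := by
  simp [Matrix.mulVec_add, Matrix.mulVec_sub, add_dotProduct, sub_dotProduct,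
    dotProduct_add, dotProduct_sub]
  ring

/-- Pointwise key inequality:
`2 · e^{-q(θ)/2} · f(x) ≤ f(θ+x) + f(θ-x)`. -/
lemma gaussianDensity_key (m : ℕ) (S : Matrix (Fin m) (Fin m) ℝ) (θ x : Fin m → ℝ) :
    2 * Real.exp (-(θ ⬝ᵥ (S⁻¹ *ᵥ θ)) / 2) * gaussianDensity m S x
      ≤ gaussianDensity m S (θ + x) + gaussianDensity m S (θ - x) := by
  set K : ℝ := (Real.sqrt ((2 * Real.pi) ^ m * S.det))⁻¹ with hK
  have hK0 : 0 ≤ K := inv_nonneg.2 (Real.sqrt_nonneg _)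
  set a : ℝ := -((θ + x) ⬝ᵥ (S⁻¹ *ᵥ (θ + x))) / 2
  set b : ℝ := -((θ - x) ⬝ᵥ (S⁻¹ *ᵥ (θ - x))) / 2
  have hab : (a + b) / 2 = -(θ ⬝ᵥ (S⁻¹ *ᵥ θ)) / 2 + -(x ⬝ᵥ (S⁻¹ *ᵥ x)) / 2 := by
    have := quad_sum m S⁻¹ θ x
    simp only [a, b]
    linarith
  have hexp : 2 * Real.exp ((a + b) / 2) ≤ Real.exp a + Real.exp b := by
    have h := two_mul_le_add_sq (Real.exp (a / 2)) (Real.exp (b / 2))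
    calc 2 * Real.exp ((a + b) / 2) = 2 * Real.exp (a / 2) * Real.exp (b / 2) := by
          rw [mul_assoc, ← Real.exp_add]; ring_nf
      _ ≤ Real.exp (a / 2) ^ 2 + Real.exp (b / 2) ^ 2 := h
      _ = Real.exp a + Real.exp b := by
          rw [sq, sq, ← Real.exp_add, ← Real.exp_add]
          norm_num
  calc 2 * Real.exp (-(θ ⬝ᵥ (S⁻¹ *ᵥ θ)) / 2) * gaussianDensity m S x
      = K * (2 * Real.exp ((a + b) / 2)) := by
        simp only [gaussianDensity, ← hK, hab, Real.exp_add]; ring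
    _ ≤ K * (Real.exp a + Real.exp b) := by
        exact mul_le_mul_of_nonneg_left hexp hK0
    _ = gaussianDensity m S (θ + x) + gaussianDensity m S (θ - x) := by
        simp only [gaussianDensity, ← hK, a, b]; ring

/-- Shifted small-ball bound for a multivariate Gaussian (Anderson-type inequality):
if `X ∼ N(0, Σ)` with `Σ` positive definite, then for every shift `θ` and every `δ > 0`,
`P(max_i |X_i − θ_i| ≤ δ) ≥ exp(−θᵀ Σ⁻¹ θ / 2) · P(max_i |X_i| ≤ δ)`. -/
theorem gaussian_shifted_small_ball (m : ℕ) (S : Matrix (Fin m) (Fin m) ℝ)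
    (hS : S.PosDef) (θ : Fin m → ℝ) (δ : ℝ) (hδ : 0 < δ) :
    ENNReal.ofReal (Real.exp (-(θ ⬝ᵥ (S⁻¹ *ᵥ θ)) / 2))
        * gaussianLaw m S {x | ∀ i, |x i| ≤ δ}
      ≤ gaussianLaw m S {x | ∀ i, |x i - θ i| ≤ δ} := by
  classical
  set f := gaussianDensity m S with hf_def
  have hf : Measurable f := gaussianDensity_measurable m S
  have hfE : Measurable fun x => ENNReal.ofReal (f x) := hf.ennreal_ofReal
  have hf0 : ∀ x, 0 ≤ f x := fun x =>
    mul_nonneg (inv_nonneg.2 (Real.sqrt_nonneg _)) (Real.exp_nonneg _)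
  set B : Set (Fin m → ℝ) := {x | ∀ i, |x i| ≤ δ} with hB_def
  set T : Set (Fin m → ℝ) := {x | ∀ i, |x i - θ i| ≤ δ} with hT_def
  have hB : MeasurableSet B := by
    have : B = ⋂ i, {x : Fin m → ℝ | |x i| ≤ δ} := by ext x; simp [hB_def]
    rw [this]
    exact MeasurableSet.iInter fun i => measurableSet_le (by fun_prop) measurable_const
  have hT : MeasurableSet T := by
    have : T = ⋂ i, {x : Fin m → ℝ | |x i - θ i| ≤ δ} := by ext x; simp [hT_def]
    rw [this]
    exact MeasurableSet.iInter fun i => measurableSet_le (by fun_prop) measurable_const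
  have hμB : gaussianLaw m S B = ∫⁻ x in B, ENNReal.ofReal (f x) := by
    rw [gaussianLaw, withDensity_apply _ hB]
  have hμT : gaussianLaw m S T = ∫⁻ x in T, ENNReal.ofReal (f x) := by
    rw [gaussianLaw, withDensity_apply _ hT]
  -- translation: ∫⁻ x in B, ofReal (f (θ + x)) = μ T
  have h₁ : ∫⁻ x in B, ENNReal.ofReal (f (θ + x)) = ∫⁻ x in T, ENNReal.ofReal (f x) := by
    have hmp : MeasurePreserving (fun x : Fin m → ℝ => θ + x) volume volume :=
      measurePreserving_add_left volume θ
    have hpre : (fun x : Fin m → ℝ => θ + x) ⁻¹' T = B := by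
      ext x
      simp [hT_def, hB_def]
    rw [← hpre]
    exact hmp.setLIntegral_comp_preimage hT hfE
  -- reflection: ∫⁻ x in B, ofReal (f (θ - x)) = μ T
  have h₂ : ∫⁻ x in B, ENNReal.ofReal (f (θ - x)) = ∫⁻ x in T, ENNReal.ofReal (f x) := by
    have hmp : MeasurePreserving (fun x : Fin m → ℝ => θ - x) volume volume := by
      have h1 := Measure.measurePreserving_neg (volume : Measure (Fin m → ℝ))
      have h2 := measurePreserving_add_left (volume : Measure (Fin m → ℝ)) θ
      simpa [Function.comp_def, sub_eq_add_neg] using h2.comp h1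
    have hpre : (fun x : Fin m → ℝ => θ - x) ⁻¹' T = B := by
      ext x
      simp only [hT_def, hB_def, Set.mem_preimage, Set.mem_setOf_eq, Pi.sub_apply]
      constructor <;> intro h i <;> have := h i <;>
        simpa [abs_sub_comm, sub_sub_cancel_left, abs_neg] using this
    rw [← hpre]
    exact hmp.setLIntegral_comp_preimage hT hfE
  set c : ℝ≥0∞ := ENNReal.ofReal (Real.exp (-(θ ⬝ᵥ (S⁻¹ *ᵥ θ)) / 2)) with hc_def
  have key : 2 * (c * gaussianLaw m S B) ≤ 2 * gaussianLaw m S T := by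
    have hg₁ : Measurable fun x : Fin m → ℝ => ENNReal.ofReal (f (θ + x)) :=
      hfE.comp (measurable_const_add θ)
    have hg₂ : Measurable fun x : Fin m → ℝ => ENNReal.ofReal (f (θ - x)) :=
      hfE.comp (measurable_const.sub measurable_id)
    calc 2 * (c * gaussianLaw m S B)
        = ∫⁻ x in B, 2 * c * ENNReal.ofReal (f x) := by
          rw [hμB, lintegral_const_mul _ hfE, mul_assoc]
      _ ≤ ∫⁻ x in B, (ENNReal.ofReal (f (θ + x)) + ENNReal.ofReal (f (θ - x))) := by
          refine lintegral_mono fun x => ?_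
          have hkey := gaussianDensity_key m S θ x
          calc 2 * c * ENNReal.ofReal (f x)
              = ENNReal.ofReal (2 * Real.exp (-(θ ⬝ᵥ (S⁻¹ *ᵥ θ)) / 2) * f x) := by
                rw [hc_def, ENNReal.ofReal_mul (by positivity), ENNReal.ofReal_mul (by norm_num)]
                norm_num
            _ ≤ ENNReal.ofReal (f (θ + x) + f (θ - x)) := ENNReal.ofReal_le_ofReal hkey
            _ = ENNReal.ofReal (f (θ + x)) + ENNReal.ofReal (f (θ - x)) :=
                ENNReal.ofReal_add (hf0 _) (hf0 _)
      _ = (∫⁻ x in B, ENNReal.ofReal (f (θ + x)))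
            + ∫⁻ x in B, ENNReal.ofReal (f (θ - x)) := lintegral_add_left hg₁ _
      _ = 2 * gaussianLaw m S T := by rw [h₁, h₂, hμT, two_mul]
  exact (ENNReal.mul_le_mul_iff_right (by norm_num) (by norm_num)).mp key
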